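/- Let X be a Polish space, K a compact metrizable compactification of X. Every bounded continuous function f on X is the pointwise limit on X of a nonincreasing sequence of functions h_n that are restrictions to X of continuous functions on K (equivalently, bounded uniformly continuous functions on X). -/
import Mathlib


open Set Topology Filter

/-- Every bounded continuous function on a Polish space X, densely embedded in a compact
metrizable space K, is the pointwise limit on X of a nonincreasing sequence of restrictions
to X of continuous functions on K. -/
theorem bounded_continuous_decreasing_limit_of_uniformly_continuous
    {X K : Type*} [TopologicalSpace X] [PolishSpace X]
    [TopologicalSpace K] [CompactSpace K] [T2Space K]
    [TopologicalSpace.MetrizableSpace K]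
    (e : X → K) (he : IsEmbedding e) (hd : DenseRange e)
    (f : BoundedContinuousFunction X ℝ) :
    ∃ h : ℕ → C(K, ℝ),
      (∀ x : X, Antitone fun n => h n (e x)) ∧
      (∀ x : X, Tendsto (fun n => h n (e x)) atTop (nhds (f x))) := by
  letI : MetricSpace K := TopologicalSpace.metrizableSpaceMetric K
  rcases isEmpty_or_nonempty X with hX | hX
  · exact ⟨fun _ => 0, fun x => (IsEmpty.false x).elim, fun x => (IsEmpty.false x).elim⟩
  set g : ℕ → K → ℝ := fun n k => ⨆ x : X, (f x - n * dist (e x) k) with hg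
  have hbdd : ∀ (n : ℕ) (k : K), BddAbove (range fun x : X => f x - n * dist (e x) k) := by
    intro n k
    refine ⟨‖f‖, ?_⟩
    rintro _ ⟨x, rfl⟩
    have h1 : f x ≤ ‖f‖ := (abs_le.1 (f.norm_coe_le_norm x)).2
    have h2 : (0:ℝ) ≤ n * dist (e x) k :=
      mul_nonneg (Nat.cast_nonneg n) dist_nonneg
    dsimp only
    linarith
  have hle : ∀ (n : ℕ) (x : X) (k : K), f x - n * dist (e x) k ≤ g n k :=
    fun n x k => le_ciSup (hbdd n k) x
  have key : ∀ (n : ℕ) (k k' : K), g n k ≤ g n k' + n * dist k k' := by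
    intro n k k'
    refine ciSup_le fun x => ?_
    have h1 := hle n x k'
    have h2 : dist (e x) k' ≤ dist (e x) k + dist k k' := dist_triangle _ _ _
    nlinarith [Nat.cast_nonneg (α := ℝ) n]
  have hlip : ∀ n : ℕ, LipschitzWith n (g n) := by
    intro n
    refine LipschitzWith.of_dist_le_mul fun k k' => ?_
    rw [Real.dist_eq, abs_sub_le_iff]
    constructor
    · have := key n k k'
      push_cast
      linarith
    · have := key n k' k
      rw [dist_comm k' k] at this
      push_cast
      linarith
  refine ⟨fun n => ⟨g n, (hlip n).continuous⟩, ?_, ?_⟩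
  · -- antitone
    intro x n m hnm
    refine ciSup_le fun y => ?_
    refine le_trans ?_ (hle n y (e x))
    have : (n:ℝ) ≤ m := Nat.cast_le.2 hnm
    nlinarith [dist_nonneg (x := e y) (y := e x)]
  · intro x
    have hlow : ∀ n : ℕ, f x ≤ g n (e x) := by
      intro n
      have := hle n x (e x)
      simpa [dist_self] using this
    rw [Metric.tendsto_atTop]
    intro ε hε
    -- continuity of f at x, pulled back through the embedding
    have hcont : ∀ᶠ y in nhds x, dist (f y) (f x) < ε/2 :=
      Metric.tendsto_nhds.1 (f.continuous.continuousAt (x := x)) (ε/2) (by positivity)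
    rw [he.toIsInducing.nhds_eq_comap, Filter.eventually_comap] at hcont
    rcases hcont.exists_mem with ⟨V, hV, hVsub⟩
    rcases Metric.mem_nhds_iff.1 hV with ⟨δ, hδ, hball⟩
    obtain ⟨N, hN⟩ := exists_nat_ge ((2 * ‖f‖) / δ)
    refine ⟨N, fun n hn => ?_⟩
    have hup : g n (e x) ≤ f x + ε/2 := by
      refine ciSup_le fun y => ?_
      by_cases hdy : dist (e y) (e x) < δ
      · have hy : dist (f y) (f x) < ε/2 := hVsub (e y) (hball hdy) y rfl
        rw [Real.dist_eq] at hy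
        have h2 : (0:ℝ) ≤ n * dist (e y) (e x) :=
          mul_nonneg (Nat.cast_nonneg n) dist_nonneg
        have := abs_lt.1 hy
        linarith [this.2]
      · push_neg at hdy
        have h1 : f y ≤ ‖f‖ := (abs_le.1 (f.norm_coe_le_norm y)).2
        have h2 : -‖f‖ ≤ f x := (abs_le.1 (f.norm_coe_le_norm x)).1
        have h3 : (N:ℝ) ≤ n := Nat.cast_le.2 hn
        have h4 : 2 * ‖f‖ ≤ (N:ℝ) * δ := by
          rw [div_le_iff₀ hδ] at hN
          linarith [mul_le_mul_of_nonneg_right hN (le_of_lt hδ)]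
        have h5 : (N:ℝ) * δ ≤ n * dist (e y) (e x) := by
          have := mul_le_mul h3 hdy (le_of_lt hδ) (Nat.cast_nonneg n)
          linarith
        linarith [hε]
    have : dist (g n (e x)) (f x) < ε := by
      rw [Real.dist_eq, abs_of_nonneg (sub_nonneg.2 (hlow n))]
      linarith
    simpa using this
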